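/- If p ∈ (0,2) and ‖t(v)‖_{ℓw_p} < ∞, then v ∈ A^s_t with s = 1/p − 1/2, and ‖v‖_{A^s_t} ≤ C ‖t(v)‖_{ℓw_p}, where C > 0 depends only on p, the number of roots, and an upper bound on the number of children per node. -/

import Mathlib

open scoped ENNReal

/-- A subset `T` of a forest (with parent map `parent`, roots = nodes with no parent)
is a tree if it contains all roots and the parent of each of its non-root elements. -/
def IsTree {S : Type*} (parent : S → Option S) (T : Set S) : Prop :=
  (∀ δ : S, parent δ = none → δ ∈ T) ∧
    ∀ δ ∈ T, ∀ δ' : S, parent δ = some δ' → δ' ∈ T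

/-- `t_λ(v) = (Σ_{λ'⪯λ} |v_{λ'}|²)^{1/2}`, where `λ' ⪯ λ` means that `λ` is reached
from `λ'` by iterating the parent map (or `λ' = λ`). -/
noncomputable def tcal {S : Type*} (parent : S → Option S) (v : S → ℝ) (lam : S) :
    ℝ :=
  Real.sqrt (∑' lam' :
    {x : S // Relation.ReflTransGen (fun a b : S => parent a = some b) x lam},
    v lam'.1 ^ 2)

/-- `w*_k`, the `k`-th largest of the values `|w_λ|` (the decreasing rearrangement):
the infimum over all sets `F` of `k−1` indices of the supremum of `|w|` outside `F`. -/
noncomputable def decRear {S : Type*} (w : S → ℝ) (k : ℕ) : ℝ≥0∞ :=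
  ⨅ (F : Finset S) (_ : F.card + 1 = k), ⨆ x : {x : S // x ∉ F}, ENNReal.ofReal |w x.1|

/-- The weak-`ℓ_p` quasi-norm `‖w‖_{ℓw_p} = sup_{k≥1} k^{1/p}·w*_k`. -/
noncomputable def wlp {S : Type*} (p : ℝ) (w : S → ℝ) : ℝ≥0∞ :=
  ⨆ k : ℕ, ((k : ℝ≥0∞) + 1) ^ (1 / p) * decRear w (k + 1)

/-- The error `inf{‖v − w‖ : supp w ⊆ T for some finite tree T ⊆ S with #T ≤ N}` of
best `N`-term tree approximation in `ℓ²(S)`. -/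
noncomputable def treeSigma {S : Type*} (parent : S → Option S) (N : ℕ)
    (v : lp (fun _ : S => ℝ) 2) : ℝ :=
  sInf {x : ℝ | ∃ (T : Finset S) (w : lp (fun _ : S => ℝ) 2),
    IsTree parent ↑T ∧ T.card ≤ N ∧ (∀ lam : S, lam ∉ T → w lam = 0) ∧ x = ‖v - w‖}

section auxi

/-- descendants of `lam` (including `lam`). -/
def DSet {S : Type*} (parent : S → Option S) (lam : S) : Set S :=
  {x | Relation.ReflTransGen (fun a b : S => parent a = some b) x lam}

variable {S : Type*} (parent : S → Option S) (v : S → ℝ)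

lemma tcal_nonneg (lam : S) : 0 ≤ tcal parent v lam := Real.sqrt_nonneg _

lemma tcal_sq (hv : Summable fun i => v i ^ 2) (lam : S) :
    tcal parent v lam ^ 2 = ∑' x : DSet parent lam, v x ^ 2 := by
  exact Real.sq_sqrt (tsum_nonneg fun x => sq_nonneg _)

lemma sq_le_tcal_sq (hv : Summable fun i => v i ^ 2) (lam : S) :
    v lam ^ 2 ≤ tcal parent v lam ^ 2 := by
  rw [tcal_sq parent v hv lam]
  exact Summable.le_tsum (hv.subtype (DSet parent lam)) ⟨lam, Relation.ReflTransGen.refl⟩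
    (fun _ _ => sq_nonneg _)

lemma abs_le_tcal (hv : Summable fun i => v i ^ 2) (lam : S) :
    |v lam| ≤ tcal parent v lam := by
  have := sq_le_tcal_sq parent v hv lam
  nlinarith [tcal_nonneg parent v lam, abs_nonneg (v lam), sq_abs (v lam)]

lemma tcal_mono (hv : Summable fun i => v i ^ 2) {δ δ' : S}
    (h : parent δ = some δ') : tcal parent v δ ≤ tcal parent v δ' := by
  apply Real.sqrt_le_sqrt
  have hsub : DSet parent δ ⊆ DSet parent δ' := by
    intro x hx
    exact Relation.ReflTransGen.tail hx h
  exact Summable.tsum_le_tsum_of_inj (Set.inclusion hsub) (Set.inclusion_injective hsub)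
    (fun _ _ => sq_nonneg _) (fun b => le_rfl) (hv.subtype _) (hv.subtype _)

lemma cover_lemma (hwf : WellFounded fun b a : S => parent a = some b)
    (T : Finset S) (hroot : ∀ δ : S, parent δ = none → δ ∈ T) :
    ∀ lam : S, lam ∉ T → ∃ μ : S, (μ ∉ T ∧ ∃ π ∈ T, parent μ = some π) ∧
      lam ∈ DSet parent μ := by
  intro lam
  induction lam using hwf.induction with
  | _ lam ih =>
    intro hlam
    cases hpar : parent lam with
    | none => exact absurd (hroot lam hpar) hlam
    | some π =>
      by_cases hπ : π ∈ T
      · exact ⟨lam, ⟨hlam, π, hπ, hpar⟩, Relation.ReflTransGen.refl⟩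
      · obtain ⟨μ, hμ1, hμ2⟩ := ih π hpar hπ
        exact ⟨μ, hμ1, Relation.ReflTransGen.head hpar hμ2⟩

end auxi

lemma wlp_count {S : Type*} {p : ℝ} (hp0 : 0 < p) (w : S → ℝ) {δ : ℝ} (hδ : 0 < δ)
    (s : Finset S) (hs : ∀ x ∈ s, δ ≤ |w x|) :
    (s.card : ℝ≥0∞) ^ (1 / p) * ENNReal.ofReal δ ≤ wlp p w := by
  rcases Nat.eq_zero_or_pos s.card with h0 | hpos
  · rw [h0]
    simp only [Nat.cast_zero, ENNReal.zero_rpow_of_pos (by positivity : (0:ℝ) < 1 / p),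
      zero_mul]
    exact zero_le
  obtain ⟨k, hk⟩ : ∃ k, s.card = k + 1 := ⟨s.card - 1, (Nat.succ_pred_eq_of_pos hpos).symm⟩
  have h1 : ENNReal.ofReal δ ≤ decRear w (k + 1) := by
    refine le_iInf fun F => le_iInf fun hF => ?_
    have hex : ∃ x ∈ s, x ∉ F := by
      by_contra hcon
      push_neg at hcon
      have hsub : s ⊆ F := hcon
      have := Finset.card_le_card hsub
      omega
    obtain ⟨x, hx, hxF⟩ := hex
    calc ENNReal.ofReal δ ≤ ENNReal.ofReal |w x| := ENNReal.ofReal_le_ofReal (hs x hx)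
    _ ≤ _ := le_iSup (fun y : {y : S // y ∉ F} => ENNReal.ofReal |w y.1|) ⟨x, hxF⟩
  calc (s.card : ℝ≥0∞) ^ (1 / p) * ENNReal.ofReal δ
      ≤ ((k : ℝ≥0∞) + 1) ^ (1 / p) * decRear w (k + 1) := by
        rw [hk]
        push_cast
        exact mul_le_mul_right h1 _
    _ ≤ wlp p w := le_iSup (fun k : ℕ => ((k : ℝ≥0∞) + 1) ^ (1 / p) * decRear w (k + 1)) k

lemma wlp_count_real {S : Type*} {p : ℝ} (hp0 : 0 < p) (w : S → ℝ)
    (hM : wlp p w ≠ ⊤) {δ : ℝ} (hδ : 0 < δ)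
    (s : Finset S) (hs : ∀ x ∈ s, δ ≤ |w x|) :
    (s.card : ℝ) * δ ^ p ≤ (wlp p w).toReal ^ p := by
  have h := wlp_count hp0 w hδ s hs
  have hfin : ((s.card : ℝ≥0∞) ^ (1 / p) * ENNReal.ofReal δ).toReal
      = (s.card : ℝ) ^ (1 / p) * δ := by
    rw [ENNReal.toReal_mul, ← ENNReal.toReal_rpow, ENNReal.toReal_natCast,
      ENNReal.toReal_ofReal hδ.le]
  have hle : (s.card : ℝ) ^ (1 / p) * δ ≤ (wlp p w).toReal := by
    rw [← hfin]
    exact ENNReal.toReal_mono hM h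
  have h2 := Real.rpow_le_rpow (by positivity) hle hp0.le
  rw [Real.mul_rpow (by positivity) hδ.le, ← Real.rpow_mul (by positivity),
    one_div_mul_cancel hp0.ne', Real.rpow_one] at h2
  exact h2

lemma levelset_finite {S : Type*} {p : ℝ} (hp0 : 0 < p) (w : S → ℝ)
    (hM : wlp p w ≠ ⊤) {δ : ℝ} (hδ : 0 < δ) : {x : S | δ ≤ |w x|}.Finite := by
  by_contra hinf
  rw [← Set.not_infinite, not_not] at hinf
  obtain ⟨n, hn⟩ := exists_nat_gt ((wlp p w).toReal ^ p / δ ^ p)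
  obtain ⟨s, hsub, hcard⟩ := hinf.exists_subset_card_eq n
  have hb := wlp_count_real hp0 w hM hδ s (fun x hx => hsub hx)
  rw [hcard] at hb
  have hd : (0:ℝ) < δ ^ p := Real.rpow_pos_of_pos hδ p
  rw [div_lt_iff₀ hd] at hn
  nlinarith

lemma dyadic_sum {S : Type*} {p ε Mp : ℝ} (hp0 : 0 < p) (hp2 : p < 2) (hε : 0 < ε)
    (hMp : 0 ≤ Mp) (t : S → ℝ) (Γ : Finset S)
    (ht0 : ∀ μ ∈ Γ, 0 ≤ t μ) (htε : ∀ μ ∈ Γ, t μ < ε)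
    (hc : ∀ δ : ℝ, 0 < δ → ∀ s : Finset S, (∀ x ∈ s, δ ≤ t x) →
      (s.card : ℝ) * δ ^ p ≤ Mp) :
    ∑ μ ∈ Γ, t μ ^ 2 ≤ 2 ^ p / (1 - 2 ^ (p - 2)) * Mp * ε ^ (2 - p) := by
  classical
  set r : ℝ := 2 ^ (p - 2) with hr
  have hr0 : 0 < r := Real.rpow_pos_of_pos two_pos _
  have hr1 : r < 1 := Real.rpow_lt_one_of_one_lt_of_neg one_lt_two (by linarith)
  set Γ' : Finset S := Γ.filter (fun μ => 0 < t μ) with hΓ'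
  have hsplit : ∑ μ ∈ Γ, t μ ^ 2 = ∑ μ ∈ Γ', t μ ^ 2 := by
    refine (Finset.sum_subset (Finset.filter_subset _ _) ?_).symm
    intro x hx hnx
    have h1 := ht0 x hx
    have h2 : ¬ 0 < t x := by simpa [hΓ', hx] using hnx
    have : t x = 0 := le_antisymm (not_lt.mp h2) h1
    simp [this]
  -- dyadic level
  set j : S → ℕ := fun μ => ⌊Real.logb 2 (ε / t μ)⌋₊ with hj
  have hfacts : ∀ μ ∈ Γ', t μ ≤ ε * 2 ^ (-(j μ : ℝ)) ∧ ε * 2 ^ (-(j μ : ℝ) - 1) < t μ := by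
    intro μ hμ
    rw [hΓ', Finset.mem_filter] at hμ
    obtain ⟨hμΓ, htpos⟩ := hμ
    have htlt : t μ < ε := htε μ hμΓ
    have hq1 : 1 ≤ ε / t μ := (one_le_div htpos).mpr htlt.le
    have hqpos : 0 < ε / t μ := by positivity
    have hlog0 : 0 ≤ Real.logb 2 (ε / t μ) := Real.logb_nonneg one_lt_two hq1
    constructor
    · have h1 : (j μ : ℝ) ≤ Real.logb 2 (ε / t μ) := Nat.floor_le hlog0
      have h2 : (2:ℝ) ^ (j μ : ℝ) ≤ (2:ℝ) ^ Real.logb 2 (ε / t μ) :=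
        Real.rpow_le_rpow_of_exponent_le one_le_two h1
      rw [Real.rpow_logb two_pos (by norm_num) hqpos] at h2
      have h3 : t μ * 2 ^ (j μ : ℝ) ≤ ε := by
        rw [mul_comm]
        calc (2:ℝ) ^ (j μ : ℝ) * t μ ≤ (ε / t μ) * t μ :=
          mul_le_mul_of_nonneg_right h2 htpos.le
        _ = ε := div_mul_cancel₀ ε htpos.ne'
      rw [Real.rpow_neg two_pos.le, ← div_eq_mul_inv,
        le_div_iff₀ (Real.rpow_pos_of_pos two_pos _)]
      exact h3
    · have h1 : Real.logb 2 (ε / t μ) < (j μ : ℝ) + 1 := Nat.lt_floor_add_one _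
      have h2 : (2:ℝ) ^ Real.logb 2 (ε / t μ) < (2:ℝ) ^ ((j μ : ℝ) + 1) :=
        Real.rpow_lt_rpow_of_exponent_lt one_lt_two h1
      rw [Real.rpow_logb two_pos (by norm_num) hqpos] at h2
      have h3 : ε < t μ * 2 ^ ((j μ : ℝ) + 1) := by
        calc ε = (ε / t μ) * t μ := (div_mul_cancel₀ ε htpos.ne').symm
        _ < (2:ℝ) ^ ((j μ : ℝ) + 1) * t μ := mul_lt_mul_of_pos_right h2 htpos
        _ = t μ * 2 ^ ((j μ : ℝ) + 1) := mul_comm _ _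
      have h4 : (0:ℝ) < (2:ℝ) ^ ((j μ : ℝ) + 1) := Real.rpow_pos_of_pos two_pos _
      have : ε * 2 ^ (-(j μ : ℝ) - 1) * 2 ^ ((j μ : ℝ) + 1) = ε := by
        rw [mul_assoc, ← Real.rpow_add two_pos]
        norm_num
      nlinarith [mul_lt_mul_of_pos_right h3 (by positivity : (0:ℝ) < 2 ^ (-(j μ : ℝ) - 1)),
        Real.rpow_pos_of_pos two_pos (-(j μ : ℝ) - 1)]
  -- per-class bound
  have hclass : ∀ jv : ℕ, ∑ μ ∈ Γ'.filter (fun μ => j μ = jv), t μ ^ 2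
      ≤ Mp * ε ^ (2 - p) * 2 ^ p * r ^ jv := by
    intro jv
    set cls := Γ'.filter (fun μ => j μ = jv) with hcls
    have hmem : ∀ μ ∈ cls, ε * 2 ^ (-(jv:ℝ) - 1) ≤ t μ ∧ t μ ≤ ε * 2 ^ (-(jv:ℝ)) := by
      intro μ hμ
      rw [hcls, Finset.mem_filter] at hμ
      obtain ⟨hμ', hjeq⟩ := hμ
      have hf := hfacts μ hμ'
      rw [hjeq] at hf
      exact ⟨hf.2.le, hf.1⟩
    have hδpos : (0:ℝ) < ε * 2 ^ (-(jv:ℝ) - 1) := by positivity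
    have hcard := hc _ hδpos cls (fun x hx => (hmem x hx).1)
    have hsum1 : ∑ μ ∈ cls, t μ ^ 2 ≤ (cls.card : ℝ) * (ε * 2 ^ (-(jv:ℝ))) ^ 2 := by
      calc ∑ μ ∈ cls, t μ ^ 2 ≤ ∑ _μ ∈ cls, (ε * 2 ^ (-(jv:ℝ))) ^ 2 := by
            refine Finset.sum_le_sum fun μ hμ => ?_
            have h1 := (hmem μ hμ).2
            have h0 : 0 ≤ t μ :=
              ht0 μ (Finset.mem_filter.mp (Finset.mem_filter.mp hμ).1).1
            nlinarith
      _ = _ := by rw [Finset.sum_const, nsmul_eq_mul]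
    have hcard' : (cls.card : ℝ) ≤ Mp / (ε * 2 ^ (-(jv:ℝ) - 1)) ^ p := by
      rw [le_div_iff₀ (Real.rpow_pos_of_pos hδpos p)]
      exact hcard
    have e1 : (ε * 2 ^ (-(jv:ℝ) - 1)) ^ p = ε ^ p * 2 ^ ((-(jv:ℝ) - 1) * p) := by
      rw [Real.mul_rpow hε.le (by positivity), ← Real.rpow_mul two_pos.le]
    have e2 : (ε * 2 ^ (-(jv:ℝ))) ^ 2 = ε ^ (2:ℝ) * 2 ^ ((-(jv:ℝ)) * 2) := by
      rw [← Real.rpow_natCast (ε * 2 ^ (-(jv:ℝ))) 2, Nat.cast_ofNat,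
        Real.mul_rpow hε.le (by positivity), ← Real.rpow_mul two_pos.le]
    have e3 : r ^ jv = (2:ℝ) ^ ((p - 2) * (jv:ℝ)) := by
      rw [hr, ← Real.rpow_natCast ((2:ℝ) ^ (p - 2)) jv, ← Real.rpow_mul two_pos.le]
    have h2jv : (2:ℝ) ^ ((-(jv:ℝ)) * 2)
        = 2 ^ ((-(jv:ℝ) - 1) * p) * (2 ^ p * 2 ^ ((p - 2) * (jv:ℝ))) := by
      rw [← Real.rpow_add two_pos, ← Real.rpow_add two_pos]
      congr 1
      ring
    have hfin : Mp / (ε * 2 ^ (-(jv:ℝ) - 1)) ^ p * (ε * 2 ^ (-(jv:ℝ))) ^ 2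
        = Mp * ε ^ (2 - p) * 2 ^ p * r ^ jv := by
      rw [e1, e2, e3, h2jv, Real.rpow_sub hε]
      have hεp : (0:ℝ) < ε ^ p := Real.rpow_pos_of_pos hε p
      have h2a : (0:ℝ) < (2:ℝ) ^ ((-(jv:ℝ) - 1) * p) := Real.rpow_pos_of_pos two_pos _
      field_simp
    calc ∑ μ ∈ cls, t μ ^ 2 ≤ (cls.card : ℝ) * (ε * 2 ^ (-(jv:ℝ))) ^ 2 := hsum1
    _ ≤ Mp / (ε * 2 ^ (-(jv:ℝ) - 1)) ^ p * (ε * 2 ^ (-(jv:ℝ))) ^ 2 :=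
        mul_le_mul_of_nonneg_right hcard' (by positivity)
    _ = Mp * ε ^ (2 - p) * 2 ^ p * r ^ jv := hfin
  have htotal : ∑ μ ∈ Γ', t μ ^ 2
      = ∑ jv ∈ Γ'.image j, ∑ μ ∈ Γ'.filter (fun μ => j μ = jv), t μ ^ 2 :=
    (Finset.sum_fiberwise_of_maps_to (fun μ hμ => Finset.mem_image_of_mem j hμ) _).symm
  have hgeo : ∑ jv ∈ Γ'.image j, r ^ jv ≤ (1 - r)⁻¹ := by
    have h1 : ∑ jv ∈ Γ'.image j, r ^ jv ≤ ∑' n : ℕ, r ^ n :=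
      Summable.sum_le_tsum _ (fun n _ => by positivity)
        (summable_geometric_of_lt_one hr0.le hr1)
    rwa [tsum_geometric_of_lt_one hr0.le hr1] at h1
  have hnn : 0 ≤ Mp * ε ^ (2 - p) * 2 ^ p :=
    mul_nonneg (mul_nonneg hMp (Real.rpow_nonneg hε.le _)) (Real.rpow_nonneg two_pos.le _)
  calc ∑ μ ∈ Γ, t μ ^ 2
      = ∑ jv ∈ Γ'.image j, ∑ μ ∈ Γ'.filter (fun μ => j μ = jv), t μ ^ 2 := by
        rw [hsplit, htotal]
    _ ≤ ∑ jv ∈ Γ'.image j, Mp * ε ^ (2 - p) * 2 ^ p * r ^ jv :=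
        Finset.sum_le_sum fun jv _ => hclass jv
    _ = Mp * ε ^ (2 - p) * 2 ^ p * ∑ jv ∈ Γ'.image j, r ^ jv := by
        rw [← Finset.mul_sum]
    _ ≤ Mp * ε ^ (2 - p) * 2 ^ p * (1 - r)⁻¹ :=
        mul_le_mul_of_nonneg_left hgeo hnn
    _ = 2 ^ p / (1 - r) * Mp * ε ^ (2 - p) := by ring


set_option maxHeartbeats 1000000 in
/-- Proposition 4.2 of the paper (after [CDD03, Prop. 2.2]): if `p ∈ (0,2)` and
`‖t(v)‖_{ℓw_p} < ∞`, then `v` belongs to the tree approximation class `A^s_t` with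
`s = 1/p − 1/2`, i.e. `sup_N (N+1)^s·σ^tree_N(v)` is finite, and
`‖v‖_{A^s_t} ≤ C‖t(v)‖_{ℓw_p}`, with `C > 0` depending only on `p`, the number of
roots, and an upper bound on the number of children per node. -/
theorem stmt_6 (p : ℝ) (hp0 : 0 < p) (hp2 : p < 2) (nR K : ℕ) :
    ∃ C : ℝ, 0 < C ∧
      ∀ (S : Type) (_ : Countable S) (parent : S → Option S),
        (WellFounded fun b a : S => parent a = some b) →
        ∀ hrfin : {δ : S | parent δ = none}.Finite,
          hrfin.toFinset.card = nR →
          {δ : S | parent δ = none}.Nonempty →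
          (∀ δ : S, {δ' : S | parent δ' = some δ}.Finite) →
          (∀ δ : S, {δ' : S | parent δ' = some δ}.ncard ≤ K) →
          ∀ v : lp (fun _ : S => ℝ) 2,
            wlp p (tcal parent fun i => v i) ≠ ⊤ →
            BddAbove (Set.range fun N : ℕ =>
              ((N : ℝ) + 1) ^ (1 / p - 1 / 2) * treeSigma parent N v) ∧
            (⨆ N : ℕ, ((N : ℝ) + 1) ^ (1 / p - 1 / 2) * treeSigma parent N v) ≤
              C * (wlp p (tcal parent fun i => v i)).toReal := by
  classical
  have hpne : p ≠ 0 := hp0.ne'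
  have hs : 0 < 1 / p - 1 / 2 := by
    have h1 : 1 / 2 < 1 / p := by
      rw [div_lt_div_iff₀ (by norm_num) hp0]
      linarith
    linarith
  have h2p2 : (2:ℝ) ^ (p - 2) < 1 :=
    Real.rpow_lt_one_of_one_lt_of_neg one_lt_two (by linarith)
  have h2p2pos : (0:ℝ) < 2 ^ (p - 2) := Real.rpow_pos_of_pos two_pos _
  set Q : ℝ := 2 ^ p / (1 - 2 ^ (p - 2)) * 2 ^ ((2 - p) / p) with hQdef
  have hQpos : 0 < Q :=
    mul_pos (div_pos (Real.rpow_pos_of_pos two_pos _) (by linarith))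
      (Real.rpow_pos_of_pos two_pos _)
  set D := Real.sqrt Q with hDdef
  have hDpos : 0 < D := Real.sqrt_pos.mpr hQpos
  refine ⟨D * ((nR:ℝ) + 1) ^ (1 / p - 1 / 2),
    mul_pos hDpos (Real.rpow_pos_of_pos (by positivity) _), ?_⟩
  intro S _ parent hwf hrfin hcard hne hcfin hK v hM
  set t : S → ℝ := tcal parent (fun i => v i) with htdef
  set M := (wlp p t).toReal with hMdef
  have hM0 : 0 ≤ M := ENNReal.toReal_nonneg
  -- summability of v²
  have hv2 : Summable fun i : S => ((v : ∀ _ : S, ℝ) i) ^ 2 := by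
    have h2 := (lp.memℓp v).summable (p := 2)
      (by norm_num : (0:ℝ) < (2:ℝ≥0∞).toReal)
    refine h2.congr fun i => ?_
    rw [ENNReal.toReal_ofNat, show ((2:ℝ)) = ((2:ℕ):ℝ) by norm_num, Real.rpow_natCast,
      Real.norm_eq_abs, sq_abs]
  have habs : ∀ x : S, |t x| = t x := fun x => abs_of_nonneg (tcal_nonneg _ _ _)
  -- treeSigma generalities
  have hbdd : ∀ N : ℕ, BddBelow {x : ℝ | ∃ (T : Finset S) (w : lp (fun _ : S => ℝ) 2),
      IsTree parent ↑T ∧ T.card ≤ N ∧ (∀ lam : S, lam ∉ T → w lam = 0) ∧ x = ‖v - w‖} := by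
    intro N
    refine ⟨0, ?_⟩
    rintro x ⟨T, w, -, -, -, rfl⟩
    exact norm_nonneg _
  have hσ_nonneg : ∀ N, 0 ≤ treeSigma parent N v := by
    intro N
    apply Real.sInf_nonneg
    rintro x ⟨T, w, -, -, -, rfl⟩
    exact norm_nonneg _
  have hσ_le : ∀ (N : ℕ) (T : Finset S) (w : lp (fun _ : S => ℝ) 2),
      IsTree parent ↑T → T.card ≤ N → (∀ lam : S, lam ∉ T → w lam = 0) →
      treeSigma parent N v ≤ ‖v - w‖ := by
    intro N T w h1 h2 h3
    exact csInf_le (hbdd N) ⟨T, w, h1, h2, h3, rfl⟩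
  have hroots_tree : IsTree parent ↑hrfin.toFinset := by
    constructor
    · intro δ hδ
      exact Finset.mem_coe.mpr (hrfin.mem_toFinset.mpr hδ)
    · intro δ hδ δ' hpar
      rw [Finset.mem_coe, Set.Finite.mem_toFinset] at hδ
      rw [Set.mem_setOf_eq] at hδ
      rw [hδ] at hpar
      cases hpar
  have hσ_zero : ∀ N : ℕ, N < nR → treeSigma parent N v = 0 := by
    intro N hN
    have hempty : {x : ℝ | ∃ (T : Finset S) (w : lp (fun _ : S => ℝ) 2),
        IsTree parent ↑T ∧ T.card ≤ N ∧ (∀ lam : S, lam ∉ T → w lam = 0) ∧ x = ‖v - w‖}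
        = ∅ := by
      ext x
      simp only [Set.mem_setOf_eq, Set.mem_empty_iff_false, iff_false, not_exists]
      intro T w
      rintro ⟨h1, h2, -, -⟩
      have hsub : hrfin.toFinset ⊆ T := by
        intro δ hδ
        exact Finset.mem_coe.mp (h1.1 δ (hrfin.mem_toFinset.mp hδ))
      have := Finset.card_le_card hsub
      omega
    unfold treeSigma
    rw [hempty]
    exact Real.sInf_empty
  -- key bound
  have hkey : ∀ N : ℕ, ((N:ℝ) + 1) ^ (1 / p - 1 / 2) * treeSigma parent N v
      ≤ D * ((nR:ℝ) + 1) ^ (1 / p - 1 / 2) * M := by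
    intro N
    rcases lt_or_ge N nR with hN | hN
    · rw [hσ_zero N hN, mul_zero]
      exact mul_nonneg (mul_pos hDpos (Real.rpow_pos_of_pos (by positivity) _)).le hM0
    rcases hM0.lt_or_eq with hMpos | hMeq
    swap
    · -- M = 0, so v vanishes identically
      have hwlp0 : wlp p t = 0 := by
        rcases (ENNReal.toReal_eq_zero_iff _).mp hMeq.symm with h | h
        · exact h
        · exact absurd h hM
      have ht00 : ∀ lam : S, t lam = 0 := by
        intro lam
        have h1 : ENNReal.ofReal |t lam| ≤ decRear t 1 := by
          refine le_iInf fun F => le_iInf fun hF => ?_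
          have hF0 : F = ∅ := Finset.card_eq_zero.mp (by omega)
          subst hF0
          exact le_iSup (fun y : {y : S // y ∉ (∅ : Finset S)} => ENNReal.ofReal |t y.1|)
            ⟨lam, by simp⟩
        have h2 : decRear t 1 ≤ wlp p t := by
          have h3 : (((0:ℕ) : ℝ≥0∞) + 1) ^ (1 / p) * decRear t (0 + 1) ≤ wlp p t :=
            le_iSup (fun k : ℕ => ((k : ℝ≥0∞) + 1) ^ (1 / p) * decRear t (k + 1)) 0
          simpa only [Nat.cast_zero, zero_add, ENNReal.one_rpow, one_mul] using h3
        have h4 : ENNReal.ofReal |t lam| = 0 :=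
          le_antisymm (by rw [← hwlp0]; exact h1.trans h2) zero_le
        rw [ENNReal.ofReal_eq_zero] at h4
        exact abs_eq_zero.mp (le_antisymm h4 (abs_nonneg _))
      have hv0 : ∀ lam : S, (v : ∀ _ : S, ℝ) lam = 0 := by
        intro lam
        have h5 := abs_le_tcal parent (fun i => (v : ∀ _ : S, ℝ) i) hv2 lam
        rw [← htdef, ht00 lam] at h5
        exact abs_eq_zero.mp (le_antisymm h5 (abs_nonneg _))
      have hle0 : treeSigma parent N v ≤ 0 := by
        have h6 := hσ_le N hrfin.toFinset v hroots_tree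
          (by rw [hcard]; exact hN) (fun lam _ => hv0 lam)
        simpa using h6
      have h7 : treeSigma parent N v = 0 := le_antisymm hle0 (hσ_nonneg N)
      rw [h7, mul_zero, ← hMeq, mul_zero]
    -- main case : 0 < M, nR ≤ N
    set m := N - nR with hmdef
    have hmN : (N:ℝ) + 1 = (m:ℝ) + (nR:ℝ) + 1 := by
      rw [hmdef]
      push_cast [Nat.cast_sub hN]
      ring
    set b : ℝ := (m:ℝ) + 1 with hbdef
    have hbpos : (0:ℝ) < b := by positivity
    set ε : ℝ := 2 ^ (1/p) * M * b ^ (-(1/p)) with hεdef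
    have hεpos : 0 < ε :=
      mul_pos (mul_pos (Real.rpow_pos_of_pos two_pos _) hMpos)
        (Real.rpow_pos_of_pos hbpos _)
    have hlev := levelset_finite hp0 t hM hεpos
    set T : Finset S := hlev.toFinset ∪ hrfin.toFinset with hTdef
    have hmemT : ∀ x : S, x ∈ T ↔ (ε ≤ t x ∨ parent x = none) := by
      intro x
      rw [hTdef, Finset.mem_union, Set.Finite.mem_toFinset, Set.Finite.mem_toFinset]
      rw [Set.mem_setOf_eq, Set.mem_setOf_eq, habs x]
    have htree : IsTree parent ↑T := by
      constructor
      · intro δ hδ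
        exact Finset.mem_coe.mpr ((hmemT δ).mpr (Or.inr hδ))
      · intro δ hδ δ' hpar
        rw [Finset.mem_coe] at hδ ⊢
        rcases (hmemT δ).mp hδ with h | h
        · refine (hmemT δ').mpr (Or.inl ?_)
          have h8 := tcal_mono parent (fun i => (v : ∀ _ : S, ℝ) i) hv2 hpar
          rw [← htdef] at h8
          linarith
        · rw [h] at hpar
          cases hpar
    have hcount : ∀ δ : ℝ, 0 < δ → ∀ s : Finset S, (∀ x ∈ s, δ ≤ t x) →
        (s.card : ℝ) * δ ^ p ≤ M ^ p := by
      intro δ hδ s hsle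
      have h9 := wlp_count_real hp0 t hM hδ s (fun x hx => by rw [habs x]; exact hsle x hx)
      rwa [← hMdef] at h9
    have hεp : ε ^ p = 2 * M ^ p * b⁻¹ := by
      have e1 : ((2:ℝ) ^ (1/p)) ^ p = 2 := by
        rw [← Real.rpow_mul two_pos.le, one_div_mul_cancel hpne, Real.rpow_one]
      have e2 : (b ^ (-(1/p))) ^ p = b⁻¹ := by
        rw [← Real.rpow_mul hbpos.le, show -(1/p) * p = -1 by field_simp,
          Real.rpow_neg_one]
      rw [hεdef, Real.mul_rpow (by positivity) (by positivity),
        Real.mul_rpow (by positivity) hMpos.le, e1, e2]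
    have hcard1 : ((hlev.toFinset.card : ℝ)) ≤ b / 2 := by
      have h1 := hcount ε hεpos hlev.toFinset (fun x hx => by
        rw [Set.Finite.mem_toFinset, Set.mem_setOf_eq, habs x] at hx
        exact hx)
      rw [hεp] at h1
      have hMp : (0:ℝ) < M ^ p := Real.rpow_pos_of_pos hMpos _
      have h5 : (hlev.toFinset.card : ℝ) * (2 * M ^ p) ≤ M ^ p * b := by
        have h4 := mul_le_mul_of_nonneg_right h1 hbpos.le
        calc (hlev.toFinset.card : ℝ) * (2 * M ^ p)
            = (hlev.toFinset.card : ℝ) * (2 * M ^ p * b⁻¹) * b := by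
              field_simp
          _ ≤ M ^ p * b := h4
      nlinarith [hMp, h5]
    have hcardm : hlev.toFinset.card ≤ m := by
      have h2 : ((hlev.toFinset.card : ℝ)) < (m:ℝ) + 1 := by
        refine lt_of_le_of_lt hcard1 ?_
        rw [hbdef]
        linarith
      have h3 : hlev.toFinset.card < m + 1 := by exact_mod_cast h2
      omega
    have hcardT : T.card ≤ N := by
      have h3 : T.card ≤ hlev.toFinset.card + hrfin.toFinset.card := by
        rw [hTdef]
        exact Finset.card_union_le _ _
      rw [hcard] at h3
      omega
    -- the boundary set Γ
    set Γset : Set S := {μ : S | μ ∉ T ∧ ∃ π ∈ T, parent μ = some π} with hΓsetdef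
    have hΓfin : Γset.Finite := by
      apply Set.Finite.subset (Set.Finite.biUnion T.finite_toSet
        (fun π _ => hcfin π))
      rintro μ ⟨hμT, π, hπ, hpar⟩
      exact Set.mem_biUnion (Finset.mem_coe.mpr hπ) hpar
    set Γ : Finset S := hΓfin.toFinset with hΓdef
    have hΓmem : ∀ μ : S, μ ∈ Γ ↔ (μ ∉ T ∧ ∃ π ∈ T, parent μ = some π) := by
      intro μ
      rw [hΓdef, Set.Finite.mem_toFinset]
      rfl
    have hΓt : ∀ μ ∈ Γ, t μ < ε := by
      intro μ hμ
      have h1 := ((hΓmem μ).mp hμ).1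
      by_contra hcon
      push_neg at hcon
      exact h1 ((hmemT μ).mpr (Or.inl hcon))
    have hcover : ∀ lam : S, lam ∉ T → ∃ μ ∈ Γ, lam ∈ DSet parent μ := by
      intro lam hlam
      obtain ⟨μ, hμ1, hμ2⟩ := cover_lemma parent hwf T
        (fun δ hδ => (hmemT δ).mpr (Or.inr hδ)) lam hlam
      exact ⟨μ, (hΓmem μ).mpr hμ1, hμ2⟩
    -- the approximant
    set wfun : ∀ _ : S, ℝ := fun lam => if lam ∈ T then (v : ∀ _ : S, ℝ) lam else 0
      with hwfundef
    have hwmem : Memℓp wfun 2 := by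
      apply memℓp_gen
      apply summable_of_ne_finset_zero (s := T)
      intro x hx
      simp only [hwfundef, hx, if_false, norm_zero]
      rw [Real.zero_rpow (by norm_num : (2:ℝ≥0∞).toReal ≠ 0)]
    set w : lp (fun _ : S => ℝ) 2 := ⟨wfun, hwmem⟩ with hwdef
    have hwsupp : ∀ lam : S, lam ∉ T → w lam = 0 := by
      intro lam h
      show wfun lam = 0
      simp only [hwfundef, h, if_false]
    have hdiff : ∀ lam : S, (v - w : lp (fun _ : S => ℝ) 2) lam
        = if lam ∈ T then 0 else (v : ∀ _ : S, ℝ) lam := by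
      intro lam
      have h1 := congrFun (lp.coeFn_sub v w) lam
      rw [Pi.sub_apply] at h1
      rw [h1]
      show (v : ∀ _ : S, ℝ) lam - wfun lam = _
      by_cases h : lam ∈ T <;> simp [hwfundef, h]
    set f : S → ℝ := fun lam => (if lam ∈ T then 0 else (v : ∀ _ : S, ℝ) lam) ^ 2
      with hfdef
    have hf_nonneg : ∀ lam, 0 ≤ f lam := fun lam => sq_nonneg _
    have hf_le : ∀ lam, f lam ≤ ((v : ∀ _ : S, ℝ) lam) ^ 2 := by
      intro lam
      simp only [hfdef]
      by_cases h : lam ∈ T <;> simp [h]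
      positivity
    have hfs : Summable f := Summable.of_nonneg_of_le hf_nonneg hf_le hv2
    have hnormsq : ‖v - w‖ ^ 2 = ∑' lam : S, f lam := by
      have h1 := lp.norm_rpow_eq_tsum
        (by norm_num : (0:ℝ) < (2:ℝ≥0∞).toReal) (v - w)
      have h2 : ‖v - w‖ ^ ((2:ℝ≥0∞)).toReal = ‖v - w‖ ^ 2 := by
        rw [ENNReal.toReal_ofNat, show ((2:ℝ)) = ((2:ℕ):ℝ) by norm_num,
          Real.rpow_natCast]
      rw [h2] at h1
      rw [h1]
      apply tsum_congr
      intro lam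
      simp only [hfdef]
      rw [ENNReal.toReal_ofNat, show ((2:ℝ)) = ((2:ℕ):ℝ) by norm_num,
        Real.rpow_natCast, Real.norm_eq_abs, sq_abs, hdiff lam]
    -- ENNReal chain
    have hofReal : ENNReal.ofReal (∑' lam : S, f lam)
        ≤ ENNReal.ofReal (∑ μ ∈ Γ, t μ ^ 2) := by
      rw [ENNReal.ofReal_tsum_of_nonneg hf_nonneg hfs,
        ENNReal.ofReal_sum_of_nonneg (fun μ _ => sq_nonneg (t μ))]
      have hind : (fun lam => ENNReal.ofReal (f lam))
          = Set.indicator ((↑T : Set S)ᶜ)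
            (fun lam => ENNReal.ofReal (((v : ∀ _ : S, ℝ) lam) ^ 2)) := by
        funext lam
        simp only [hfdef]
        by_cases h : lam ∈ T
        · simp [Set.indicator_apply, h]
        · simp [Set.indicator_apply, h]
      calc ∑' lam : S, ENNReal.ofReal (f lam)
          = ∑' lam : (((↑T : Set S)ᶜ : Set S)),
              ENNReal.ofReal (((v : ∀ _ : S, ℝ) lam) ^ 2) := by
            rw [hind]
            exact (tsum_subtype _ _).symm
        _ ≤ ∑' lam : (⋃ μ ∈ Γ, DSet parent μ),
              ENNReal.ofReal (((v : ∀ _ : S, ℝ) lam) ^ 2) := by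
            refine ENNReal.tsum_mono_subtype
              (fun a => ENNReal.ofReal (((v : ∀ _ : S, ℝ) a) ^ 2)) ?_
            intro lam hlam
            rw [Set.mem_compl_iff, Finset.mem_coe] at hlam
            obtain ⟨μ, hμΓ, hdsc⟩ := hcover lam hlam
            exact Set.mem_biUnion hμΓ hdsc
        _ ≤ ∑ μ ∈ Γ, ∑' lam : DSet parent μ,
              ENNReal.ofReal (((v : ∀ _ : S, ℝ) lam) ^ 2) :=
            ENNReal.tsum_biUnion_le
              (fun a => ENNReal.ofReal (((v : ∀ _ : S, ℝ) a) ^ 2)) Γ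
              (fun μ => DSet parent μ)
        _ = ∑ μ ∈ Γ, ENNReal.ofReal (t μ ^ 2) := by
            apply Finset.sum_congr rfl
            intro μ _
            have h3 : t μ ^ 2 = ∑' x : DSet parent μ, ((v : ∀ _ : S, ℝ) x) ^ 2 := by
              rw [htdef]
              exact tcal_sq parent _ hv2 μ
            rw [h3]
            exact (ENNReal.ofReal_tsum_of_nonneg (fun _ => sq_nonneg _)
              (hv2.subtype _)).symm
    have hΓbound : ∑ μ ∈ Γ, t μ ^ 2
        ≤ 2 ^ p / (1 - 2 ^ (p - 2)) * M ^ p * ε ^ (2 - p) :=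
      dyadic_sum hp0 hp2 hεpos (Real.rpow_pos_of_pos hMpos p).le t Γ
        (fun μ _ => by rw [htdef]; exact tcal_nonneg _ _ _) hΓt hcount
    have hBnonneg : (0:ℝ) ≤ 2 ^ p / (1 - 2 ^ (p - 2)) * M ^ p * ε ^ (2 - p) :=
      mul_nonneg (mul_nonneg (div_nonneg (Real.rpow_pos_of_pos two_pos _).le
        (by linarith)) (Real.rpow_pos_of_pos hMpos _).le)
        (Real.rpow_pos_of_pos hεpos _).le
    have hsum_le : ∑' lam : S, f lam
        ≤ 2 ^ p / (1 - 2 ^ (p - 2)) * M ^ p * ε ^ (2 - p) := by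
      have h4 := le_trans hofReal (ENNReal.ofReal_le_ofReal hΓbound)
      rwa [ENNReal.ofReal_le_ofReal_iff hBnonneg] at h4
    -- final constants computation
    have hQ'eq : 2 ^ p / (1 - 2 ^ (p - 2)) * M ^ p * ε ^ (2 - p)
        = (D * M * b ^ (-(1 / p - 1 / 2))) ^ 2 := by
      have hεe : ε ^ (2 - p)
          = 2 ^ ((1/p) * (2 - p)) * (M ^ (2 - p) * b ^ ((-(1/p)) * (2 - p))) := by
        rw [hεdef, Real.mul_rpow (by positivity) (by positivity),
          Real.mul_rpow (by positivity) hMpos.le,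
          ← Real.rpow_mul two_pos.le, ← Real.rpow_mul hbpos.le]
        ring
      have hDsq : D ^ 2 = 2 ^ p / (1 - 2 ^ (p - 2)) * 2 ^ ((2 - p) / p) := by
        rw [hDdef, Real.sq_sqrt hQpos.le, hQdef]
      have hbsq : (b ^ (-(1 / p - 1 / 2))) ^ 2 = b ^ ((-(1/p)) * (2 - p)) := by
        rw [← Real.rpow_natCast (b ^ (-(1 / p - 1 / 2))) 2, ← Real.rpow_mul hbpos.le]
        congr 1
        push_cast
        field_simp
      have hM2 : M ^ p * M ^ (2 - p) = M ^ (2:ℕ) := by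
        rw [← Real.rpow_add hMpos, ← Real.rpow_natCast M 2]
        norm_num
      have hexp : ((2:ℝ) - p) / p = (1/p) * (2 - p) := by ring
      rw [hεe, mul_pow, mul_pow, hDsq, hbsq, hexp, ← hM2]
      ring
    have herr : ‖v - w‖ ≤ D * M * b ^ (-(1 / p - 1 / 2)) := by
      have h1 : ‖v - w‖ ^ 2 ≤ (D * M * b ^ (-(1 / p - 1 / 2))) ^ 2 := by
        rw [hnormsq, ← hQ'eq]
        exact hsum_le
      have h2 : (0:ℝ) ≤ D * M * b ^ (-(1 / p - 1 / 2)) :=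
        (mul_pos (mul_pos hDpos hMpos) (Real.rpow_pos_of_pos hbpos _)).le
      nlinarith [norm_nonneg (v - w)]
    have hfinal : treeSigma parent N v ≤ D * M * b ^ (-(1 / p - 1 / 2)) :=
      le_trans (hσ_le N T w htree hcardT hwsupp) herr
    have hNle : (N:ℝ) + 1 ≤ ((nR:ℝ) + 1) * b := by
      rw [hmN, hbdef]
      nlinarith [(Nat.cast_nonneg m : (0:ℝ) ≤ (m:ℝ)), (Nat.cast_nonneg nR : (0:ℝ) ≤ (nR:ℝ))]
    have hpowb : ((N:ℝ) + 1) ^ (1 / p - 1 / 2) * b ^ (-(1 / p - 1 / 2))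
        ≤ ((nR:ℝ) + 1) ^ (1 / p - 1 / 2) := by
      have h1 : ((N:ℝ) + 1) ^ (1 / p - 1 / 2)
          ≤ (((nR:ℝ) + 1) * b) ^ (1 / p - 1 / 2) :=
        Real.rpow_le_rpow (by positivity) hNle hs.le
      rw [Real.mul_rpow (by positivity) hbpos.le] at h1
      have h2 : (0:ℝ) ≤ b ^ (-(1 / p - 1 / 2)) := (Real.rpow_pos_of_pos hbpos _).le
      calc ((N:ℝ) + 1) ^ (1 / p - 1 / 2) * b ^ (-(1 / p - 1 / 2))
          ≤ ((nR:ℝ) + 1) ^ (1 / p - 1 / 2) * b ^ (1 / p - 1 / 2)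
            * b ^ (-(1 / p - 1 / 2)) := mul_le_mul_of_nonneg_right h1 h2
        _ = ((nR:ℝ) + 1) ^ (1 / p - 1 / 2) := by
            rw [mul_assoc, ← Real.rpow_add hbpos, add_neg_cancel, Real.rpow_zero,
              mul_one]
    calc ((N:ℝ) + 1) ^ (1 / p - 1 / 2) * treeSigma parent N v
        ≤ ((N:ℝ) + 1) ^ (1 / p - 1 / 2) * (D * M * b ^ (-(1 / p - 1 / 2))) :=
          mul_le_mul_of_nonneg_left hfinal (Real.rpow_pos_of_pos (by positivity) _).le
      _ = D * M * (((N:ℝ) + 1) ^ (1 / p - 1 / 2) * b ^ (-(1 / p - 1 / 2))) := by ring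
      _ ≤ D * M * ((nR:ℝ) + 1) ^ (1 / p - 1 / 2) :=
          mul_le_mul_of_nonneg_left hpowb (mul_pos hDpos hMpos).le
      _ = D * ((nR:ℝ) + 1) ^ (1 / p - 1 / 2) * M := by ring
  constructor
  · refine ⟨D * ((nR:ℝ) + 1) ^ (1 / p - 1 / 2) * M, ?_⟩
    rintro x ⟨N, rfl⟩
    exact hkey N
  · exact ciSup_le hkey
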